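/- Let τ > 0, μ ∈ ℝ, set a = √τ, b = −2μ, and let v(s) = (2/a)·( (b/a)·(1 − cos(a·s)) − sin(a·s) ) (the case i = 1). Let s₁ be the first positive zero of v. Then for all s ∈ (0, s₁), one has (a²·v(s)²/4)·(v'/v)'(s) = b·(a·sin(a·s) + b·cos(a·s)) − (a² + b²); in particular, the function s ↦ v'(s)/v(s) is strictly decreasing on (0, s₁). -/

import Mathlib

open Real

theorem stmt_6 (τ μ a b : ℝ) (hτ : 0 < τ) (ha : a = Real.sqrt τ) (hb : b = -2 * μ)
    (v : ℝ → ℝ)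
    (hv : ∀ s : ℝ, v s = (2 / a) *
      ((b / a) * (1 - Real.cos (a * s)) - Real.sin (a * s)))
    (s₁ : ℝ) (hs₁ : s₁ ∈ Set.Ioo 0 (2 * π / a)) (hz : v s₁ = 0)
    (hfirst : ∀ s ∈ Set.Ioo 0 s₁, v s ≠ 0) :
    (∀ s ∈ Set.Ioo 0 s₁,
      (a ^ 2 * v s ^ 2 / 4) * deriv (fun t => deriv v t / v t) s
        = b * (a * Real.sin (a * s) + b * Real.cos (a * s)) - (a ^ 2 + b ^ 2)) ∧
    StrictAntiOn (fun t => deriv v t / v t) (Set.Ioo 0 s₁) := by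
  have ha0 : 0 < a := ha ▸ Real.sqrt_pos.mpr hτ
  have hane : a ≠ 0 := ne_of_gt ha0
  set w : ℝ → ℝ := fun t => 2 * ((b / a) * Real.sin (a * t) - Real.cos (a * t)) with hw
  -- first derivative
  have hvd : ∀ t : ℝ, HasDerivAt v (w t) t := by
    intro t
    have hfun : v = fun s => (2 / a) * ((b / a) * (1 - Real.cos (a * s)) - Real.sin (a * s)) :=
      funext hv
    rw [hfun]
    have h1 : HasDerivAt (fun s : ℝ => a * s) a t := by
      simpa using (hasDerivAt_id t).const_mul a
    have hc : HasDerivAt (fun s => Real.cos (a * s)) (-Real.sin (a * t) * a) t :=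
      (Real.hasDerivAt_cos (a * t)).comp t h1
    have hs : HasDerivAt (fun s => Real.sin (a * s)) (Real.cos (a * t) * a) t :=
      (Real.hasDerivAt_sin (a * t)).comp t h1
    have := ((((hasDerivAt_const t (1 : ℝ)).sub hc).const_mul (b / a)).sub hs).const_mul (2 / a)
    convert this using 1
    show 2 * (b / a * Real.sin (a * t) - Real.cos (a * t)) = _
    rw [div_mul_eq_mul_div, div_mul_eq_mul_div, mul_div_assoc]
    field_simp
    ring
    all_goals rfl
  have hderiv_v : deriv v = w := funext fun t => (hvd t).deriv
  -- second derivative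
  have hwd : ∀ t : ℝ, HasDerivAt w (2 * (b * Real.cos (a * t) + a * Real.sin (a * t))) t := by
    intro t
    have h1 : HasDerivAt (fun s : ℝ => a * s) a t := by
      simpa using (hasDerivAt_id t).const_mul a
    have hc : HasDerivAt (fun s => Real.cos (a * s)) (-Real.sin (a * t) * a) t :=
      (Real.hasDerivAt_cos (a * t)).comp t h1
    have hs : HasDerivAt (fun s => Real.sin (a * s)) (Real.cos (a * t) * a) t :=
      (Real.hasDerivAt_sin (a * t)).comp t h1
    have := (((hs.const_mul (b / a)).sub hc).const_mul (2 : ℝ))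
    convert this using 1
    show 2 * (b * Real.cos (a * t) + a * Real.sin (a * t)) = _
    rw [div_mul_eq_mul_div]
    field_simp
    ring
    all_goals rfl
  -- the numerator identity
  have hN : ∀ s : ℝ, 2 * (b * Real.cos (a * s) + a * Real.sin (a * s)) * v s - w s * w s
      = (4 / a ^ 2) * (b * (a * Real.sin (a * s) + b * Real.cos (a * s)) - (a ^ 2 + b ^ 2)) := by
    intro s
    have pyth := Real.sin_sq_add_cos_sq (a * s)
    rw [hv s, hw]
    field_simp [hane]
    linear_combination (-(4 * b ^ 2 + 4 * a ^ 2)) * pyth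
  -- derivative of the quotient
  have hq : ∀ s ∈ Set.Ioo 0 s₁, HasDerivAt (fun t => deriv v t / v t)
      ((2 * (b * Real.cos (a * s) + a * Real.sin (a * s)) * v s - w s * w s) / v s ^ 2) s := by
    intro s hs
    have hvne := hfirst s hs
    have := (hwd s).div (hvd s) hvne
    rw [hderiv_v]
    exact this
  -- numerator is negative
  have hNneg : ∀ s : ℝ, b * (a * Real.sin (a * s) + b * Real.cos (a * s)) - (a ^ 2 + b ^ 2) < 0 := by
    intro s
    have pyth := Real.sin_sq_add_cos_sq (a * s)
    nlinarith [sq_nonneg (b * Real.sin (a * s) - a), sq_nonneg (b * (1 - Real.cos (a * s))),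
      sq_nonneg a, ha0]
  refine ⟨?_, ?_⟩
  · intro s hs
    have hvne := hfirst s hs
    have hv2 : v s ^ 2 ≠ 0 := pow_ne_zero 2 hvne
    rw [(hq s hs).deriv, hN s]
    field_simp
  · have hdiffOn : ∀ s ∈ Set.Ioo 0 s₁, DifferentiableAt ℝ (fun t => deriv v t / v t) s :=
      fun s hs => (hq s hs).differentiableAt
    apply strictAntiOn_of_deriv_neg (convex_Ioo 0 s₁)
    · exact fun s hs => (hdiffOn s hs).continuousAt.continuousWithinAt
    · intro s hs
      rw [interior_Ioo] at hs
      rw [(hq s hs).deriv, hN s]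
      apply div_neg_of_neg_of_pos
      · have := hNneg s
        have h4 : 0 < 4 / a ^ 2 := by positivity
        nlinarith
      · exact pow_two_pos_of_ne_zero (hfirst s hs)
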